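/- Every fence admits an ε-cover for every ε > 0: if X is a fence and ε > 0, then there exists a finite open cover 𝒞 of X which is the union of finitely many ε-chains whose links are pairwise disjoint (links from different chains are disjoint), and such that any two members of 𝒞 with disjoint closures lie at positive distance from each other. -/

import Mathlib

open Set Filter Topology Metric

noncomputable section

/-- An arc in a topological space: a subset homeomorphic to the closed unit
interval `[0,1]`. -/
def IsArc {X : Type*} [TopologicalSpace X] (A : Set X) : Prop :=
  Nonempty (Set.Icc (0 : ℝ) 1 ≃ₜ A)

/-- `x` is an endpoint of the arc `A`: it is the image of `0` or `1` under some
homeomorphism from `[0,1]` onto `A`. -/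
def IsArcEndpoint {X : Type*} [TopologicalSpace X] (A : Set X) (x : X) : Prop :=
  ∃ e : Set.Icc (0 : ℝ) 1 ≃ₜ A,
    (e ⟨0, by norm_num⟩ : X) = x ∨ (e ⟨1, by norm_num⟩ : X) = x

/-- A point `x` on the frontier of an open set `U` is a piercing point of `U` if
for every open `V ∋ x` and every arc `α` in the space containing `x` with `x` not
an endpoint of `α`, the set `α ∩ V` meets both `U` and the complement of the
closure of `U`. -/
def IsPiercingPoint {X : Type*} [TopologicalSpace X] (U : Set X) (x : X) : Prop :=
  x ∈ frontier U ∧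
    ∀ V : Set X, IsOpen V → x ∈ V →
      ∀ α : Set X, IsArc α → x ∈ α → ¬ IsArcEndpoint α x →
        (α ∩ V ∩ U).Nonempty ∧ (α ∩ V ∩ (closure U)ᶜ).Nonempty

/-- An open set is pierced if every point of its frontier is a piercing point. -/
def IsPierced {X : Type*} [TopologicalSpace X] (U : Set X) : Prop :=
  IsOpen U ∧ ∀ x ∈ frontier U, IsPiercingPoint U x

/-- A space has the Jure property if its topology has a basis of pierced open sets. -/
def HasJureProperty (X : Type*) [TopologicalSpace X] : Prop :=
  ∃ B : Set (Set X), TopologicalSpace.IsTopologicalBasis B ∧ ∀ U ∈ B, IsPierced U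

/-- A fence: a compact metric space each of whose connected components is an arc
or a single point. -/
def IsFenceSpace (X : Type*) [MetricSpace X] : Prop :=
  CompactSpace X ∧
    ∀ x : X, IsArc (connectedComponent x) ∨ connectedComponent x = {x}

/-- `X` is a fan with vertex `v`: a continuum which is the union of a collection
of arcs any two of which meet exactly at `v`, and in which the intersection of
any two subcontinua is connected. -/
def IsFanWithVertex (X : Type*) [MetricSpace X] (v : X) : Prop :=
  Nonempty X ∧ CompactSpace X ∧ ConnectedSpace X ∧
    (∃ 𝓛 : Set (Set X), (∀ L ∈ 𝓛, IsArc L) ∧ ⋃₀ 𝓛 = Set.univ ∧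
      ∀ L ∈ 𝓛, ∀ L' ∈ 𝓛, L ≠ L' → L ∩ L' = {v}) ∧
    ∀ H K : Set X, H.Nonempty → IsCompact H → IsPreconnected H →
      K.Nonempty → IsCompact K → IsPreconnected K → IsPreconnected (H ∩ K)

/-- The Euclidean plane. -/
abbrev Plane : Type := EuclideanSpace ℝ (Fin 2)

/-- The closed annulus `A_{rq}(p)` between the circles of radii `r` and `q`
centered at `p`. -/
def closedAnnulus (p : Plane) (r q : ℝ) : Set Plane :=
  {x | min r q ≤ dist x p ∧ dist x p ≤ max r q}

/-- A fence inside the plane: a compact set each of whose connected components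
is an arc or a single point. -/
def IsFenceSet (X : Set Plane) : Prop :=
  IsCompact X ∧ ∀ x ∈ X,
    IsArc (connectedComponentIn X x) ∨ connectedComponentIn X x = {x}

/-- `β` is a bend at `S_r(p)` terminating at `S_q(p)`: an arc `β ⊆ X` contained
in the closed annulus `A_{rq}(p)`, meeting `S_r(p)`, and meeting `S_q(p)`
exactly in its two endpoints. -/
def IsBendTerminating (X : Set Plane) (p : Plane) (r q : ℝ) (β : Set Plane) : Prop :=
  IsArc β ∧ β ⊆ X ∧ β ⊆ closedAnnulus p r q ∧
    (β ∩ Metric.sphere p r).Nonempty ∧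
    β ∩ Metric.sphere p q = {x | IsArcEndpoint β x}

/-- `β` is a bend at `S_r(p)`: a bend terminating at `S_q(p)` for some `q > 0`. -/
def IsBendAt (X : Set Plane) (p : Plane) (r : ℝ) (β : Set Plane) : Prop :=
  ∃ q > 0, IsBendTerminating X p r q β

/-- The bend `β` (terminating at `S_q(p)`) separates `ϑ` from `∞`: there is an
arc `α ⊆ D_q(p)` meeting `S_q(p)` exactly at the endpoints of `β` such that `ϑ`
lies in a bounded connected component of the complement of `α ∪ β`. -/
def SeparatesFromInfinity (p : Plane) (q : ℝ) (β : Set Plane) (ϑ : Plane) : Prop :=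
  ∃ α : Set Plane, IsArc α ∧ α ⊆ Metric.closedBall p q ∧
    α ∩ Metric.sphere p q = {x | IsArcEndpoint β x} ∧
    ϑ ∉ α ∪ β ∧ Bornology.IsBounded (connectedComponentIn ((α ∪ β)ᶜ) ϑ)

/-- `𝔅_{qrϑ}`: the set of all bends at `S_r(p)` terminating at `S_q(p)` that
separate `ϑ` from `∞`. -/
def Bends (X : Set Plane) (p : Plane) (q r : ℝ) (ϑ : Plane) : Set (Set Plane) :=
  {β | IsBendTerminating X p r q β ∧ SeparatesFromInfinity p q β ϑ}

/-- Topological limit superior of a sequence of sets: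
`⋂_N closure (⋃_{n ≥ N} A n)`. -/
def setLimsup {X : Type*} [TopologicalSpace X] (A : ℕ → Set X) : Set X :=
  ⋂ N : ℕ, closure (⋃ n, ⋃ _ : N ≤ n, A n)

/-- The point `p + q • (cos θ, sin θ)` of the circle `S_q(p)`. -/
def circlePoint (p : Plane) (q θ : ℝ) : Plane :=
  p + (q * Real.cos θ) • EuclideanSpace.single (0 : Fin 2) (1 : ℝ)
    + (q * Real.sin θ) • EuclideanSpace.single (1 : Fin 2) (1 : ℝ)

namespace FenceEpsCover

variable (K : Set ℝ) (m0 δ : ℝ) (N : ℕ)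

/-- Grid point. -/
noncomputable def b (j : ℕ) : ℝ := m0 + j * δ

/-- Cell `j` is occupied. -/
def SmemP (j : ℕ) : Prop := j < N ∧ (K ∩ Icc (b m0 δ j) (b m0 δ (j + 1))).Nonempty

/-- Cells `j-1` and `j` are linked. -/
def linkedP (j : ℕ) : Prop :=
  SmemP K m0 δ N j ∧ j ≠ 0 ∧ SmemP K m0 δ N (j - 1) ∧
    (K ∩ Ioo (b m0 δ j - 2 * δ / 5) (b m0 δ j + 2 * δ / 5)).Nonempty

open Classical in
/-- Left endpoint of the interval for cell `j`. -/
noncomputable def Lp (j : ℕ) : ℝ :=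
  if linkedP K m0 δ N j then b m0 δ j - 2 * δ / 5
  else if j ≠ 0 ∧ SmemP K m0 δ N (j - 1) then b m0 δ j + δ / 5 else b m0 δ j - δ / 5

open Classical in
/-- Right endpoint of the interval for cell `j`. -/
noncomputable def Rp (j : ℕ) : ℝ :=
  if linkedP K m0 δ N (j + 1) then b m0 δ (j + 1) + 2 * δ / 5
  else if SmemP K m0 δ N (j + 1) then b m0 δ (j + 1) - δ / 5 else b m0 δ (j + 1) + δ / 5

variable {K m0 δ N}

lemma b_succ (j : ℕ) : b m0 δ (j + 1) = b m0 δ j + δ := by simp [b]; ring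

lemma b_mono (hδ : 0 < δ) {j j' : ℕ} (h : j ≤ j') : b m0 δ j ≤ b m0 δ j' := by
  have : (j : ℝ) ≤ (j' : ℝ) := Nat.cast_le.mpr h
  simp only [b]; nlinarith

lemma Lp_ge (hδ : 0 < δ) (j : ℕ) : b m0 δ j - 2 * δ / 5 ≤ Lp K m0 δ N j := by
  unfold Lp; split_ifs <;> linarith

lemma Lp_le (hδ : 0 < δ) (j : ℕ) : Lp K m0 δ N j ≤ b m0 δ j + δ / 5 := by
  unfold Lp; split_ifs <;> linarith

lemma Rp_ge (hδ : 0 < δ) (j : ℕ) : b m0 δ (j + 1) - δ / 5 ≤ Rp K m0 δ N j := by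
  unfold Rp; split_ifs <;> linarith

lemma Rp_le (hδ : 0 < δ) (j : ℕ) : Rp K m0 δ N j ≤ b m0 δ (j + 1) + 2 * δ / 5 := by
  unfold Rp; split_ifs <;> linarith

lemma Lp_lt_Rp (hδ : 0 < δ) (j : ℕ) : Lp K m0 δ N j < Rp K m0 δ N j := by
  have h1 := Lp_le (K := K) (m0 := m0) (N := N) hδ j
  have h2 := Rp_ge (K := K) (m0 := m0) (N := N) hδ j
  have h3 := b_succ (m0 := m0) (δ := δ) j
  linarith

lemma width (hδ : 0 < δ) (j : ℕ) :
    Rp K m0 δ N j - Lp K m0 δ N j ≤ 9 * δ / 5 := by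
  have h1 := Lp_ge (K := K) (m0 := m0) (N := N) hδ j
  have h2 := Rp_le (K := K) (m0 := m0) (N := N) hδ j
  have h3 := b_succ (m0 := m0) (δ := δ) j
  linarith

/-- Every point of `K` in cell `j` lies in the open interval for cell `j`. -/
lemma cover_cell (hδ : 0 < δ) {j : ℕ} (hS : SmemP K m0 δ N j) {k : ℝ} (hk : k ∈ K)
    (hk1 : b m0 δ j ≤ k) (hk2 : k ≤ b m0 δ (j + 1)) :
    k ∈ Ioo (Lp K m0 δ N j) (Rp K m0 δ N j) := by
  have hbs := b_succ (m0 := m0) (δ := δ) j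
  constructor
  · unfold Lp
    split_ifs with h1 h2
    · linarith
    · -- j ≠ 0, previous cell occupied, but not linked: no K-points near `b j`
      have hno : ¬ (K ∩ Ioo (b m0 δ j - 2 * δ / 5) (b m0 δ j + 2 * δ / 5)).Nonempty := by
        intro hne; exact h1 ⟨hS, h2.1, h2.2, hne⟩
      by_contra hlt
      push_neg at hlt
      exact hno ⟨k, hk, by constructor <;> linarith⟩
    · linarith
  · unfold Rp
    split_ifs with h1 h2
    · linarith
    · -- next cell occupied but not linked
      have hno : ¬ (K ∩ Ioo (b m0 δ (j + 1) - 2 * δ / 5) (b m0 δ (j + 1) + 2 * δ / 5)).Nonempty := by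
        intro hne
        exact h1 ⟨h2, by omega, by simpa using hS, hne⟩
      by_contra hlt
      push_neg at hlt
      exact hno ⟨k, hk, by constructor <;> linarith⟩
    · linarith

/-- Cells at distance ≥ 2 have separated closed intervals. -/
lemma sep (hδ : 0 < δ) {j j' : ℕ} (h : j + 2 ≤ j') :
    Rp K m0 δ N j < Lp K m0 δ N j' := by
  have h1 := Rp_le (K := K) (m0 := m0) (N := N) hδ j
  have h2 := Lp_ge (K := K) (m0 := m0) (N := N) hδ j'
  have h3 : b m0 δ (j + 2) ≤ b m0 δ j' := b_mono hδ h
  have h4 := b_succ (m0 := m0) (δ := δ) j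
  have h5 := b_succ (m0 := m0) (δ := δ) (j + 1)
  linarith

/-- Adjacent occupied but unlinked cells have separated closed intervals. -/
lemma adj_unlinked (hδ : 0 < δ) {j : ℕ} (hS : SmemP K m0 δ N j)
    (hS' : SmemP K m0 δ N (j + 1)) (hnl : ¬ linkedP K m0 δ N (j + 1)) :
    Rp K m0 δ N j < Lp K m0 δ N (j + 1) := by
  have hR : Rp K m0 δ N j = b m0 δ (j + 1) - δ / 5 := by
    unfold Rp; rw [if_neg hnl, if_pos hS']
  have hL : Lp K m0 δ N (j + 1) = b m0 δ (j + 1) + δ / 5 := by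
    unfold Lp; rw [if_neg hnl, if_pos ⟨by omega, by simpa using hS⟩]
  rw [hR, hL]; linarith

/-- For linked adjacent cells, the central `Ioo` lies in both open intervals. -/
lemma adj_linked (hδ : 0 < δ) {j : ℕ} (hl : linkedP K m0 δ N (j + 1)) {k : ℝ}
    (hk : k ∈ Ioo (b m0 δ (j + 1) - 2 * δ / 5) (b m0 δ (j + 1) + 2 * δ / 5)) :
    k ∈ Ioo (Lp K m0 δ N j) (Rp K m0 δ N j) ∧
      k ∈ Ioo (Lp K m0 δ N (j + 1)) (Rp K m0 δ N (j + 1)) := by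
  have hbs := b_succ (m0 := m0) (δ := δ) j
  have hbs' := b_succ (m0 := m0) (δ := δ) (j + 1)
  have hR : Rp K m0 δ N j = b m0 δ (j + 1) + 2 * δ / 5 := by unfold Rp; rw [if_pos hl]
  have hL : Lp K m0 δ N (j + 1) = b m0 δ (j + 1) - 2 * δ / 5 := by unfold Lp; rw [if_pos hl]
  have h1 := Lp_le (K := K) (m0 := m0) (N := N) hδ j
  have h2 := Rp_ge (K := K) (m0 := m0) (N := N) hδ (j + 1)
  obtain ⟨hk1, hk2⟩ := hk
  exact ⟨⟨by linarith, by linarith⟩, ⟨by linarith, by linarith⟩⟩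

lemma not_linked_of_lt (h : N < j) : ¬ linkedP K m0 δ N j := fun hl => by
  exact absurd hl.1.1 (by omega)

lemma exists_not_linked (s : ℕ) : ∃ t, ¬ linkedP K m0 δ N (s + t + 1) :=
  ⟨N, not_linked_of_lt (by omega)⟩

open Classical in
/-- Length of the chain starting at cell `s`. -/
noncomputable def len (K : Set ℝ) (m0 δ : ℝ) (N : ℕ) (s : ℕ) : ℕ :=
  Nat.find (exists_not_linked (K := K) (m0 := m0) (δ := δ) (N := N) s) + 1

lemma one_le_len (s : ℕ) : 1 ≤ len K m0 δ N s := Nat.le_add_left 1 _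

open Classical in
lemma linked_of_lt {s t : ℕ} (h : t + 1 < len K m0 δ N s) :
    linkedP K m0 δ N (s + t + 1) := by
  have := Nat.find_min (exists_not_linked (K := K) (m0 := m0) (δ := δ) (N := N) s)
    (m := t) (by unfold len at h; omega)
  tauto

open Classical in
lemma not_linked_add_len (s : ℕ) : ¬ linkedP K m0 δ N (s + len K m0 δ N s) := by
  have h := Nat.find_spec (exists_not_linked (K := K) (m0 := m0) (δ := δ) (N := N) s)
  have h2 : s + len K m0 δ N s
      = s + Nat.find (exists_not_linked (K := K) (m0 := m0) (δ := δ) (N := N) s) + 1 := by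
    unfold len; omega
  rw [h2]; exact h

/-- `s` starts a chain. -/
def isStartP (j : ℕ) : Prop := SmemP K m0 δ N j ∧ ¬ linkedP K m0 δ N j

lemma smem_of_lt_len {s t : ℕ} (hs : isStartP (K := K) (m0 := m0) (δ := δ) (N := N) s)
    (ht : t < len K m0 δ N s) : SmemP K m0 δ N (s + t) := by
  cases t with
  | zero => exact hs.1
  | succ t => exact (linked_of_lt ht).1

lemma linked_of_start_lt {s t : ℕ} (ht1 : 1 ≤ t) (ht2 : t < len K m0 δ N s) :
    linkedP K m0 δ N (s + t) := by
  obtain ⟨t', rfl⟩ : ∃ t', t = t' + 1 := ⟨t - 1, by omega⟩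
  exact linked_of_lt (by omega)

/-- Every occupied cell belongs to a chain. -/
lemma chain_cover {j : ℕ} (hj : SmemP K m0 δ N j) :
    ∃ s t, isStartP (K := K) (m0 := m0) (δ := δ) (N := N) s ∧ t < len K m0 δ N s ∧
      j = s + t := by
  induction j using Nat.strong_induction_on with
  | _ j ih =>
    by_cases hl : linkedP K m0 δ N j
    · have hj0 : j ≠ 0 := hl.2.1
      obtain ⟨s, t, hst, htlen, hjt⟩ := ih (j - 1) (by omega) hl.2.2.1
      have hj' : j = s + t + 1 := by omega
      refine ⟨s, t + 1, hst, ?_, by omega⟩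
      by_contra hge
      have : t + 1 = len K m0 δ N s := by omega
      exact not_linked_add_len s (by rw [← this, ← Nat.add_assoc, ← hj']; exact hl)
    · exact ⟨j, 0, ⟨hj, hl⟩, one_le_len j, rfl⟩

/-- No chain contains a start of another chain in its interior. -/
lemma start_inj {s t s' t' : ℕ}
    (hs : isStartP (K := K) (m0 := m0) (δ := δ) (N := N) s)
    (hs' : isStartP (K := K) (m0 := m0) (δ := δ) (N := N) s')
    (ht : t < len K m0 δ N s) (ht' : t' < len K m0 δ N s')
    (heq : s + t = s' + t') : s = s' ∧ t = t' := by
  rcases lt_trichotomy s s' with h | h | h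
  · exfalso
    exact hs'.2 (by
      have : s' = s + (s' - s) := by omega
      rw [this]
      exact linked_of_start_lt (by omega) (by omega))
  · omega
  · exfalso
    exact hs.2 (by
      have : s = s' + (s - s') := by omega
      rw [this]
      exact linked_of_start_lt (by omega) (by omega))

open Set Metric in
/-- Chain decomposition of a single clopen piece sitting inside a good open set. -/
lemma piece_chains {X : Type*} [MetricSpace X] [CompactSpace X] {ε : ℝ} (hε : 0 < ε)
    (A O : Set X) (hAopen : IsOpen A) (hAclosed : IsClosed A) (hAO : A ⊆ O)
    (g : X → ℝ) (hg : Continuous g) (η : ℝ) (hη : 0 < η)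
    (hgood : ∀ y ∈ O, ∀ z ∈ O, |g y - g z| ≤ η → dist y z ≤ ε / 2) :
    ∃ (m : ℕ) (n : Fin m → ℕ) (U : (i : Fin m) → Fin (n i) → Set X),
      (∀ i j, IsOpen (U i j)) ∧ (∀ i j, U i j ⊆ A) ∧
      (∀ i j, Metric.diam (U i j) < ε) ∧
      (∀ i (j j' : Fin (n i)),
        (closure (U i j) ∩ closure (U i j')).Nonempty ↔ ((j : ℤ) - (j' : ℤ)).natAbs ≤ 1) ∧
      (∀ i i', i ≠ i' → ∀ j j', Disjoint (U i j) (U i' j')) ∧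
      (∀ x ∈ A, ∃ i j, x ∈ U i j) := by
  classical
  rcases A.eq_empty_or_nonempty with rfl | hAne
  · exact ⟨0, fun i => i.elim0, fun i => i.elim0, fun i => i.elim0, fun i => i.elim0,
      fun i => i.elim0, fun i => i.elim0, fun i => i.elim0, fun x hx => absurd hx (by simp)⟩
  set K : Set ℝ := g '' A with hK
  have hKcomp : IsCompact K := (hAclosed.isCompact).image hg
  have hKne : K.Nonempty := hAne.image g
  set δ : ℝ := η / 2 with hδdef
  have hδ : 0 < δ := by positivity
  set m0 : ℝ := sInf K with hm0
  set M0 : ℝ := sSup K with hM0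
  obtain ⟨N, hN⟩ := exists_nat_gt ((M0 - m0) / δ)
  have hNδ : M0 - m0 < N * δ := by
    rwa [div_lt_iff₀ hδ] at hN
  have hmem_bounds : ∀ k ∈ K, m0 ≤ k ∧ k ≤ M0 := fun k hk =>
    ⟨csInf_le hKcomp.bddBelow hk, le_csSup hKcomp.bddAbove hk⟩
  -- every point of K has an occupied cell
  have hfind : ∀ k ∈ K, ∃ j : ℕ, SmemP K m0 δ N j ∧ b m0 δ j ≤ k ∧ k ≤ b m0 δ (j + 1) := by
    intro k hk
    obtain ⟨hk1, hk2⟩ := hmem_bounds k hk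
    have hu0 : 0 ≤ (k - m0) / δ := div_nonneg (by linarith) hδ.le
    set j : ℕ := ⌊(k - m0) / δ⌋₊ with hj
    have hud : (k - m0) / δ * δ = k - m0 := by field_simp
    have hj1 : (j : ℝ) * δ ≤ k - m0 := by
      have := Nat.floor_le hu0
      nlinarith
    have hj2 : k - m0 < ((j : ℝ) + 1) * δ := by
      have := Nat.lt_floor_add_one ((k - m0) / δ)
      nlinarith
    have hjN : j < N := by
      have : (j : ℝ) * δ < (N : ℝ) * δ := by linarith
      exact_mod_cast lt_of_mul_lt_mul_right this hδ.le
    have hb1 : b m0 δ j ≤ k := by simp only [b]; linarith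
    have hb2 : k ≤ b m0 δ (j + 1) := by
      simp only [b]; push_cast; linarith
    exact ⟨j, ⟨hjN, ⟨k, hk, hb1, hb2⟩⟩, hb1, hb2⟩
  set starts : Finset ℕ :=
    (Finset.range (N + 1)).filter (fun j => isStartP (K := K) (m0 := m0) (δ := δ) (N := N) j)
    with hstarts
  set m : ℕ := starts.card with hm
  set E : Fin m ≃ starts := starts.equivFin.symm with hE
  set sOf : Fin m → ℕ := fun i => (E i : ℕ) with hsOf
  have hstart : ∀ i, isStartP (K := K) (m0 := m0) (δ := δ) (N := N) (sOf i) := by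
    intro i
    exact (Finset.mem_filter.mp (E i).2).2
  have hsOf_inj : ∀ i i', i ≠ i' → sOf i ≠ sOf i' := by
    intro i i' hne heq
    exact hne (E.injective (Subtype.ext heq))
  refine ⟨m, fun i => len K m0 δ N (sOf i),
    fun i j => A ∩ g ⁻¹' (Ioo (Lp K m0 δ N (sOf i + j)) (Rp K m0 δ N (sOf i + j))),
    ?_, ?_, ?_, ?_, ?_, ?_⟩
  · exact fun i j => hAopen.inter (isOpen_Ioo.preimage hg)
  · exact fun i j => inter_subset_left
  · -- diameter
    intro i j
    have : Metric.diam (A ∩ g ⁻¹' (Ioo (Lp K m0 δ N (sOf i + j)) (Rp K m0 δ N (sOf i + j))))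
        ≤ ε / 2 := by
      apply Metric.diam_le_of_forall_dist_le (by linarith)
      rintro y ⟨hyA, hy⟩ z ⟨hzA, hz⟩
      apply hgood y (hAO hyA) z (hAO hzA)
      have hw := width (K := K) (m0 := m0) (N := N) hδ (sOf i + j)
      simp only [mem_preimage, mem_Ioo] at hy hz
      have : |g y - g z| < Rp K m0 δ N (sOf i + j) - Lp K m0 δ N (sOf i + j) := by
        rw [abs_lt]; constructor <;> linarith [hy.1, hy.2, hz.1, hz.2]
      have h910 : 9 * δ / 5 ≤ η := by rw [hδdef]; linarith
      linarith
    linarith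
  · -- chain condition
    intro i j j'
    set s := sOf i with hs
    have hlen : ∀ t : Fin (len K m0 δ N s), SmemP K m0 δ N (s + t) :=
      fun t => smem_of_lt_len (hstart i) t.2
    constructor
    · rintro ⟨x, hx1, hx2⟩
      by_contra hfar
      -- wlog via cases
      have key : ∀ t t' : ℕ, t + 2 ≤ t' →
          ¬ (x ∈ closure (A ∩ g ⁻¹' (Ioo (Lp K m0 δ N (s + t)) (Rp K m0 δ N (s + t)))) ∧
             x ∈ closure (A ∩ g ⁻¹' (Ioo (Lp K m0 δ N (s + t')) (Rp K m0 δ N (s + t'))))) := by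
        rintro t t' htt ⟨h1, h2⟩
        have hcl : ∀ u : ℕ,
            closure (A ∩ g ⁻¹' (Ioo (Lp K m0 δ N (s + u)) (Rp K m0 δ N (s + u)))) ⊆
              A ∩ g ⁻¹' (Icc (Lp K m0 δ N (s + u)) (Rp K m0 δ N (s + u))) := by
          intro u
          apply closure_minimal
          · exact inter_subset_inter_right _ (preimage_mono Ioo_subset_Icc_self)
          · exact hAclosed.inter (isClosed_Icc.preimage hg)
        have hx1' := hcl t h1
        have hx2' := hcl t' h2
        have hsep := sep (K := K) (m0 := m0) (N := N) hδ
          (j := s + t) (j' := s + t') (by omega)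
        have := hx1'.2.2
        have := hx2'.2.1
        simp only [mem_inter_iff, mem_preimage, mem_Icc] at hx1' hx2'
        linarith [hx1'.2.2, hx2'.2.1]
      have hne2 : ((j : ℤ) - (j' : ℤ)).natAbs ≥ 2 := by omega
      rcases le_or_gt ((j : ℕ) + 2) (j' : ℕ) with hle | hlt
      · exact key j j' hle ⟨hx1, hx2⟩
      · have : (j' : ℕ) + 2 ≤ (j : ℕ) := by omega
        exact key j' j this ⟨hx2, hx1⟩
    · intro hnear
      have habs : (j : ℕ) = (j' : ℕ) ∨ (j : ℕ) + 1 = (j' : ℕ) ∨ (j' : ℕ) + 1 = (j : ℕ) := by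
        omega
      -- helper: a common point of consecutive links
      have hcons : ∀ t : ℕ, t + 1 < len K m0 δ N s →
          ∃ x, x ∈ (A ∩ g ⁻¹' (Ioo (Lp K m0 δ N (s + t)) (Rp K m0 δ N (s + t)))) ∩
            (A ∩ g ⁻¹' (Ioo (Lp K m0 δ N (s + (t + 1))) (Rp K m0 δ N (s + (t + 1))))) := by
        intro t ht
        have hlk : linkedP K m0 δ N (s + t + 1) := linked_of_lt ht
        obtain ⟨k, hkK, hkI⟩ := hlk.2.2.2
        obtain ⟨x, hxA, hgx⟩ := hkK
        have := adj_linked (K := K) (m0 := m0) (N := N) hδ (j := s + t) hlk (k := k) hkI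
        refine ⟨x, ⟨hxA, ?_⟩, ⟨hxA, ?_⟩⟩
        · simp only [mem_preimage, hgx]; exact this.1
        · simp only [mem_preimage]
          rw [hgx]
          have h2 := this.2
          rwa [show s + t + 1 = s + (t + 1) by omega] at h2
      rcases habs with heq | hsucc | hsucc
      · -- same link; nonempty
        obtain ⟨k, hkK, hk1, hk2⟩ := (hlen j).2
        have hIoo' : k ∈ Ioo (Lp K m0 δ N (s + (j : ℕ))) (Rp K m0 δ N (s + (j : ℕ))) :=
          cover_cell hδ (hlen j) hkK hk1 hk2
        obtain ⟨x, hxA, hgx⟩ := hkK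
        refine ⟨x, subset_closure ⟨hxA, by simp only [mem_preimage, hgx]; exact hIoo'⟩,
          subset_closure ⟨hxA, ?_⟩⟩
        simp only [mem_preimage, hgx, ← heq]
        exact hIoo'
      · obtain ⟨x, hx1, hx2⟩ := hcons j (by rw [hsucc]; exact j'.2)
        refine ⟨x, subset_closure hx1, subset_closure ?_⟩
        rwa [show (j : ℕ) + 1 = (j' : ℕ) from hsucc] at hx2
      · obtain ⟨x, hx1, hx2⟩ := hcons j' (by rw [hsucc]; exact j.2)
        refine ⟨x, subset_closure ?_, subset_closure hx1⟩
        rwa [show (j' : ℕ) + 1 = (j : ℕ) from hsucc] at hx2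
  · -- links of distinct chains are disjoint
    intro i i' hne j j'
    have hs := hstart i
    have hs' := hstart i'
    have hj2 : (j : ℕ) < len K m0 δ N (sOf i) := j.2
    have hj'2 : (j' : ℕ) < len K m0 δ N (sOf i') := j'.2
    rw [Set.disjoint_left]
    rintro x ⟨hxA, hxI⟩ ⟨_, hxI'⟩
    simp only [mem_preimage, mem_Ioo] at hxI hxI'
    have hSa : SmemP K m0 δ N (sOf i + (j : ℕ)) := smem_of_lt_len hs j.2
    have hSc : SmemP K m0 δ N (sOf i' + (j' : ℕ)) := smem_of_lt_len hs' j'.2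
    have hcell : sOf i + (j : ℕ) ≠ sOf i' + (j' : ℕ) := by
      intro heq
      exact hsOf_inj i i' hne (start_inj hs hs' j.2 j'.2 heq).1
    rcases lt_trichotomy (sOf i + (j : ℕ)) (sOf i' + (j' : ℕ)) with hac | hac | hac
    · rcases Nat.lt_or_ge (sOf i + (j : ℕ) + 1) (sOf i' + (j' : ℕ)) with h2 | h2
      · have := sep (K := K) (m0 := m0) (N := N) hδ
          (j := sOf i + (j : ℕ)) (j' := sOf i' + (j' : ℕ)) (by omega)
        linarith [hxI.2, hxI'.1]
      · have hc1 : sOf i' + (j' : ℕ) = sOf i + (j : ℕ) + 1 := by omega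
        have hnl : ¬ linkedP K m0 δ N (sOf i + (j : ℕ) + 1) := by
          intro hl
          rcases Nat.eq_zero_or_pos (j' : ℕ) with hj0 | hj0
          · apply hs'.2
            have hseq : sOf i' = sOf i + (j : ℕ) + 1 := by omega
            rwa [hseq]
          · have hj1 : (j' : ℕ) - 1 < len K m0 δ N (sOf i') := by omega
            have heq := start_inj hs hs' j.2 hj1
              (show sOf i + (j : ℕ) = sOf i' + ((j' : ℕ) - 1) by omega)
            exact hsOf_inj i i' hne heq.1
        have hlt := adj_unlinked (K := K) (m0 := m0) (N := N) hδ hSa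
          (by rw [← hc1]; exact hSc) hnl
        rw [← hc1] at hlt
        linarith [hxI.2, hxI'.1]
    · exact hcell hac
    · rcases Nat.lt_or_ge (sOf i' + (j' : ℕ) + 1) (sOf i + (j : ℕ)) with h2 | h2
      · have := sep (K := K) (m0 := m0) (N := N) hδ
          (j := sOf i' + (j' : ℕ)) (j' := sOf i + (j : ℕ)) (by omega)
        linarith [hxI'.2, hxI.1]
      · have hc1 : sOf i + (j : ℕ) = sOf i' + (j' : ℕ) + 1 := by omega
        have hnl : ¬ linkedP K m0 δ N (sOf i' + (j' : ℕ) + 1) := by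
          intro hl
          rcases Nat.eq_zero_or_pos (j : ℕ) with hj0 | hj0
          · apply hs.2
            have hseq : sOf i = sOf i' + (j' : ℕ) + 1 := by omega
            rwa [hseq]
          · have hj1 : (j : ℕ) - 1 < len K m0 δ N (sOf i) := by omega
            have heq := start_inj hs' hs j'.2 hj1
              (show sOf i' + (j' : ℕ) = sOf i + ((j : ℕ) - 1) by omega)
            exact hsOf_inj i i' hne heq.1.symm
        have hlt := adj_unlinked (K := K) (m0 := m0) (N := N) hδ hSc
          (by rw [← hc1]; exact hSa) hnl
        rw [← hc1] at hlt
        linarith [hxI'.2, hxI.1]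
  · -- cover
    intro x hx
    have hk : g x ∈ K := ⟨x, hx, rfl⟩
    obtain ⟨jc, hS, hb1, hb2⟩ := hfind (g x) hk
    obtain ⟨s, t, hst, htl, hjc⟩ := chain_cover (K := K) (m0 := m0) (δ := δ) (N := N) hS
    have hsmem : s ∈ starts := by
      refine Finset.mem_filter.mpr ⟨Finset.mem_range.mpr ?_, hst⟩
      have := hst.1.1
      omega
    set i : Fin m := starts.equivFin ⟨s, hsmem⟩ with hi
    have hsOfi : sOf i = s := by
      simp only [hsOf, hi, hE]
      rw [Equiv.symm_apply_apply]
    refine ⟨i, ⟨t, show t < len K m0 δ N (sOf i) by rw [hsOfi]; exact htl⟩, hx, ?_⟩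
    simp only [mem_preimage]
    rw [hsOfi]
    have : s + t = jc := hjc.symm
    rw [this]
    exact cover_cell hδ hS hk hb1 hb2

open Set Metric in
/-- In a compact Hausdorff space, between a connected component and an open set
containing it there is a clopen set. -/
lemma exists_isClopen_between {X : Type*} [TopologicalSpace X] [T2Space X] [CompactSpace X]
    (x : X) {O : Set X} (hO : IsOpen O) (hsub : connectedComponent x ⊆ O) :
    ∃ W : Set X, IsClopen W ∧ connectedComponent x ⊆ W ∧ W ⊆ O := by
  by_contra hcon
  push_neg at hcon
  haveI : Nonempty {s : Set X // IsClopen s ∧ x ∈ s} := ⟨⟨univ, isClopen_univ, mem_univ x⟩⟩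
  have hne : ∀ s : {s : Set X // IsClopen s ∧ x ∈ s}, ((s : Set X) ∩ Oᶜ).Nonempty := by
    intro s
    rcases ((s : Set X) ∩ Oᶜ).eq_empty_or_nonempty with he | h
    · exfalso
      have hsO : (s : Set X) ⊆ O := by
        intro y hy
        by_contra hyO
        exact absurd he (Set.nonempty_iff_ne_empty.mp ⟨y, hy, hyO⟩)
      have hcs : connectedComponent x ⊆ (s : Set X) := by
        have := connectedComponent_subset_iInter_isClopen (x := x)
        exact fun y hy => by
          have := this hy
          exact mem_iInter.mp this s
      exact hcon (s : Set X) s.2.1 hcs hsO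
    · exact h
  have key := IsCompact.nonempty_iInter_of_directed_nonempty_isCompact_isClosed
    (fun s : {s : Set X // IsClopen s ∧ x ∈ s} => (s : Set X) ∩ Oᶜ)
    (fun s u => ⟨⟨(s : Set X) ∩ u, s.2.1.inter u.2.1, s.2.2, u.2.2⟩,
      fun y hy => ⟨hy.1.1, hy.2⟩, fun y hy => ⟨hy.1.2, hy.2⟩⟩)
    hne
    (fun s => (s.2.1.isClosed.inter (hO.isClosed_compl)).isCompact)
    (fun s => s.2.1.isClosed.inter hO.isClosed_compl)
  obtain ⟨y, hy⟩ := key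
  have hyO : y ∈ Oᶜ := (mem_iInter.mp hy ⟨univ, isClopen_univ, mem_univ x⟩).2
  have hyC : y ∈ connectedComponent x := by
    rw [connectedComponent_eq_iInter_isClopen]
    exact mem_iInter.mpr fun s => (mem_iInter.mp hy s).1
  exact hyO (hsub hyC)

open Set Metric in
/-- Every point of a fence has a "good triple": an open set containing its
connected component together with a continuous real function whose fibers are
locally small. -/
lemma good_triple {X : Type*} [MetricSpace X] [CompactSpace X] {ε : ℝ} (hε : 0 < ε)
    (hcomp : ∀ x : X, IsArc (connectedComponent x) ∨ connectedComponent x = {x}) (x : X) :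
    ∃ (O : Set X) (g : X → ℝ) (η : ℝ), IsOpen O ∧ connectedComponent x ⊆ O ∧
      Continuous g ∧ 0 < η ∧
      ∀ y ∈ O, ∀ z ∈ O, |g y - g z| ≤ η → dist y z ≤ ε / 2 := by
  rcases hcomp x with harc | hpt
  · obtain ⟨e⟩ := harc
    set C := connectedComponent x with hC
    have hCclosed : IsClosed C := isClosed_connectedComponent
    set f : C(C, ℝ) := ⟨fun c => ((e.symm c : Icc (0:ℝ) 1) : ℝ),
      continuous_subtype_val.comp e.symm.continuous⟩ with hf
    obtain ⟨G, hG⟩ := f.exists_restrict_eq hCclosed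
    have hgC : ∀ c : C, G c = ((e.symm c : Icc (0:ℝ) 1) : ℝ) := by
      intro c
      have := DFunLike.congr_fun hG c
      exact this
    set h : ℝ → X := fun s => ((e (projIcc (0:ℝ) 1 zero_le_one s) : C) : X) with hh
    have hhcont : Continuous h :=
      continuous_subtype_val.comp (e.continuous.comp continuous_projIcc)
    have hfix : ∀ c : C, h (G c) = c := by
      intro c
      rw [hgC c, hh]
      simp only [projIcc_val]
      rw [Homeomorph.apply_symm_apply]
    set O : Set X := {y | dist y (h (G y)) < ε / 8} with hO
    have hOopen : IsOpen O := by
      have : Continuous fun y => dist y (h (G y)) :=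
        continuous_id.dist (hhcont.comp G.continuous)
      exact isOpen_lt this continuous_const
    have hCO : C ⊆ O := by
      intro c hc
      have hfx : h (G c) = c := hfix ⟨c, hc⟩
      show dist c (h (G c)) < ε / 8
      rw [hfx, dist_self]
      positivity
    haveI : CompactSpace (Icc (0:ℝ) 1) := isCompact_iff_compactSpace.mp isCompact_Icc
    have hHc : Continuous fun s : Icc (0:ℝ) 1 => ((e s : C) : X) :=
      continuous_subtype_val.comp e.continuous
    have hUC := CompactSpace.uniformContinuous_of_continuous hHc
    obtain ⟨d, hd, hball⟩ := Metric.uniformContinuous_iff.mp hUC (ε / 8) (by positivity)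
    refine ⟨O, G, d / 2, hOopen, hCO, G.continuous, by positivity, ?_⟩
    intro y hy z hz hgz
    have hproj : dist (projIcc (0:ℝ) 1 zero_le_one (G y)) (projIcc (0:ℝ) 1 zero_le_one (G z))
        ≤ dist (G y) (G z) := by
      have := (LipschitzWith.projIcc (a := (0:ℝ)) (b := 1) zero_le_one).dist_le_mul (G y) (G z)
      simpa using this
    have hdd : dist (G y) (G z) ≤ d / 2 := by rw [Real.dist_eq]; exact hgz
    have hmid : dist (h (G y)) (h (G z)) < ε / 8 := by
      rw [hh]
      exact hball (lt_of_le_of_lt (hproj.trans hdd) (by linarith))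
    have h1 : dist y (h (G y)) < ε / 8 := hy
    have h2 : dist z (h (G z)) < ε / 8 := hz
    have := dist_triangle4 y (h (G y)) (h (G z)) z
    have h2' : dist (h (G z)) z = dist z (h (G z)) := dist_comm _ _
    linarith
  · refine ⟨Metric.ball x (ε / 8), fun _ => 0, 1, Metric.isOpen_ball, ?_,
      continuous_const, one_pos, ?_⟩
    · rw [hpt]
      intro y hy
      rw [mem_singleton_iff] at hy
      subst hy
      exact Metric.mem_ball_self (by positivity)
    · intro y hy z hz _
      have := dist_triangle y x z
      rw [Metric.mem_ball] at hy hz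
      have hzx : dist x z = dist z x := dist_comm _ _
      linarith

/-- Make a list of sets pairwise disjoint keeping the union. -/
def disjointify {X : Type*} : List (Set X) → List (Set X)
  | [] => []
  | s :: r => s :: (disjointify r).map (fun A => A \ s)

lemma disjointify_subset {X : Type*} {l : List (Set X)} {A : Set X}
    (hA : A ∈ disjointify l) : ∃ B ∈ l, A ⊆ B := by
  induction l generalizing A with
  | nil => simp [disjointify] at hA
  | cons s r ih =>
    rcases List.mem_cons.mp hA with heq | hA'
    · exact ⟨s, List.mem_cons_self, heq ▸ subset_rfl⟩
    · obtain ⟨A', hmem, heq⟩ := List.mem_map.mp hA'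
      obtain ⟨B, hB, hsub⟩ := ih hmem
      exact ⟨B, List.mem_cons_of_mem _ hB, heq ▸ (Set.diff_subset.trans hsub)⟩

lemma disjointify_clopen {X : Type*} [TopologicalSpace X] {l : List (Set X)}
    (h : ∀ B ∈ l, IsClopen B) : ∀ A ∈ disjointify l, IsClopen A := by
  induction l with
  | nil => simp [disjointify]
  | cons s r ih =>
    intro A hA
    rcases List.mem_cons.mp hA with heq | hA'
    · exact heq ▸ h s (List.mem_cons_self)
    · obtain ⟨A', hmem, heq⟩ := List.mem_map.mp hA'
      exact heq ▸ ((ih (fun B hB => h B (List.mem_cons_of_mem _ hB)) A' hmem).diff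
        (h s (List.mem_cons_self)))

lemma disjointify_cover {X : Type*} {l : List (Set X)} {x : X}
    (hx : ∃ B ∈ l, x ∈ B) : ∃ A ∈ disjointify l, x ∈ A := by
  induction l with
  | nil => simp at hx
  | cons s r ih =>
    by_cases hxs : x ∈ s
    · exact ⟨s, List.mem_cons_self, hxs⟩
    · obtain ⟨B, hB, hxB⟩ := hx
      rcases List.mem_cons.mp hB with rfl | hB'
      · exact absurd hxB hxs
      · obtain ⟨A, hA, hxA⟩ := ih ⟨B, hB', hxB⟩
        exact ⟨A \ s, List.mem_cons_of_mem _ (List.mem_map.mpr ⟨A, hA, rfl⟩), hxA, hxs⟩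

lemma disjointify_pairwise {X : Type*} (l : List (Set X)) :
    (disjointify l).Pairwise (Disjoint : Set X → Set X → Prop) := by
  induction l with
  | nil => simp [disjointify]
  | cons s r ih =>
    refine List.Pairwise.cons ?_ ?_
    · intro A hA
      obtain ⟨A', _, heq⟩ := List.mem_map.mp hA
      exact heq ▸ (Set.disjoint_left.mpr (fun a ha hmem => hmem.2 ha))
    · exact ih.map _ (fun A B hAB => hAB.mono Set.diff_subset Set.diff_subset)

end FenceEpsCover
open Set Metric FenceEpsCover in
theorem fence_has_eps_cover' (X : Type*) [MetricSpace X]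
    (hc : CompactSpace X)
    (hcomp : ∀ x : X, IsArc (connectedComponent x) ∨ connectedComponent x = {x})
    (ε : ℝ) (hε : 0 < ε) :
    ∃ (m : ℕ) (n : Fin m → ℕ) (U : (i : Fin m) → Fin (n i) → Set X),
      (∀ i j, IsOpen (U i j)) ∧
      (∀ i j, Metric.diam (U i j) < ε) ∧
      (∀ i, ∀ j j' : Fin (n i),
        (closure (U i j) ∩ closure (U i j')).Nonempty ↔
          ((j : ℤ) - (j' : ℤ)).natAbs ≤ 1) ∧
      (∀ i i' : Fin m, i ≠ i' → ∀ j j', Disjoint (U i j) (U i' j')) ∧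
      (∀ x : X, ∃ i j, x ∈ U i j) ∧
      (∀ i j i' j', Disjoint (closure (U i j)) (closure (U i' j')) →
        ∃ δ : ℝ, 0 < δ ∧ ∀ y ∈ U i j, ∀ z ∈ U i' j', δ ≤ dist y z) := by
  classical
  haveI : CompactSpace X := hc
  choose O g η hOopen hCO hgcont hηpos hgd using fun x : X =>
    FenceEpsCover.good_triple hε hcomp x
  choose W hWclop hWC hWO using fun x : X =>
    FenceEpsCover.exists_isClopen_between x (hOopen x) (hCO x)
  have hxW : ∀ x : X, x ∈ W x := fun x => hWC x mem_connectedComponent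
  obtain ⟨t, ht⟩ := isCompact_univ.elim_finite_subcover W (fun x => (hWclop x).isOpen)
    (fun y _ => mem_iUnion.mpr ⟨y, hxW y⟩)
  set l : List (Set X) := t.toList.map W with hl
  set pieces : List (Set X) := FenceEpsCover.disjointify l with hpieces
  have hlW : ∀ B ∈ l, ∃ x, B = W x := by
    intro B hB
    obtain ⟨x, _, hxB⟩ := List.mem_map.mp hB
    exact ⟨x, hxB.symm⟩
  have hPclop : ∀ A ∈ pieces, IsClopen A :=
    FenceEpsCover.disjointify_clopen
      (fun B hB => by obtain ⟨x, rfl⟩ := hlW B hB; exact hWclop x)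
  have hAll : ∀ k : Fin pieces.length,
      ∃ (pm : ℕ) (pn : Fin pm → ℕ) (pU : (i : Fin pm) → Fin (pn i) → Set X),
      (∀ i j, IsOpen (pU i j)) ∧ (∀ i j, pU i j ⊆ pieces.get k) ∧
      (∀ i j, Metric.diam (pU i j) < ε) ∧
      (∀ i (j j' : Fin (pn i)),
        (closure (pU i j) ∩ closure (pU i j')).Nonempty ↔
          ((j : ℤ) - (j' : ℤ)).natAbs ≤ 1) ∧
      (∀ i i', i ≠ i' → ∀ j j', Disjoint (pU i j) (pU i' j')) ∧
      (∀ x ∈ pieces.get k, ∃ i j, x ∈ pU i j) := by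
    intro k
    have hA : pieces.get k ∈ pieces := List.get_mem pieces k
    obtain ⟨B, hB, hsub⟩ := FenceEpsCover.disjointify_subset hA
    obtain ⟨x, rfl⟩ := hlW B hB
    have hclop := hPclop _ hA
    exact FenceEpsCover.piece_chains hε (pieces.get k) (O x) hclop.isOpen hclop.isClosed
      (hsub.trans (hWO x)) (g x) (hgcont x) (η x) (hηpos x) (hgd x)
  choose pm pn pU h1 h2 h3 h4 h5 h6 using hAll
  set ι := (k : Fin pieces.length) × Fin (pm k) with hι
  set E : Fin (Fintype.card ι) ≃ ι := (Fintype.equivFin ι).symm with hE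
  refine ⟨Fintype.card ι, fun i => pn (E i).1 (E i).2, fun i j => pU (E i).1 (E i).2 j,
    fun i j => h1 _ _ j, fun i j => h3 _ _ j, fun i => h4 _ _, ?_, ?_, ?_⟩
  · -- links of different chains are disjoint
    intro i i' hne
    have hEne : E i ≠ E i' := fun h => hne (E.injective h)
    rcases hEi : E i with ⟨k, a⟩
    rcases hEi' : E i' with ⟨k', a'⟩
    rw [hEi, hEi'] at hEne
    show ∀ (j : Fin (pn (E i).1 (E i).2)) (j' : Fin (pn (E i').1 (E i').2)),
        Disjoint (pU (E i).1 (E i).2 j) (pU (E i').1 (E i').2 j')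
    rw [hEi, hEi']
    by_cases hk : k = k'
    · subst hk
      have ha : a ≠ a' := fun h => hEne (by rw [h])
      exact h5 k a a' ha
    · intro j j'
      have hdisj : Disjoint (pieces.get k) (pieces.get k') := by
        rcases lt_trichotomy k k' with hlt | heq | hlt
        · exact List.pairwise_iff_get.mp (FenceEpsCover.disjointify_pairwise l) k k' hlt
        · exact absurd (Fin.ext (congrArg Fin.val heq)) hk
        · exact (List.pairwise_iff_get.mp
            (FenceEpsCover.disjointify_pairwise l) k' k hlt).symm
      exact hdisj.mono (h2 k a j) (h2 k' a' j')
  · -- cover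
    intro x
    have hxl : ∃ B ∈ l, x ∈ B := by
      obtain ⟨y, hyt, hxy⟩ := mem_iUnion₂.mp (ht (mem_univ x))
      exact ⟨W y, List.mem_map.mpr ⟨y, Finset.mem_toList.mpr hyt, rfl⟩, hxy⟩
    obtain ⟨A, hA, hxA⟩ := FenceEpsCover.disjointify_cover hxl
    obtain ⟨k, hk⟩ := List.mem_iff_get.mp hA
    obtain ⟨i0, j0, hx0⟩ := h6 k x (by rw [hk]; exact hxA)
    refine ⟨E.symm ⟨k, i0⟩, ?_⟩
    have hEE : E (E.symm ⟨k, i0⟩) = ⟨k, i0⟩ := E.apply_symm_apply _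
    show ∃ jj : Fin (pn (E (E.symm ⟨k, i0⟩)).1 (E (E.symm ⟨k, i0⟩)).2),
        x ∈ pU (E (E.symm ⟨k, i0⟩)).1 (E (E.symm ⟨k, i0⟩)).2 jj
    rw [hEE]
    exact ⟨j0, hx0⟩
  · -- positive distance
    intro i j i' j' hdisj
    rcases (pU (E i).1 (E i).2 j).eq_empty_or_nonempty with he | hne1
    · exact ⟨1, one_pos, fun y hy => absurd hy (by simp [he])⟩
    rcases (pU (E i').1 (E i').2 j').eq_empty_or_nonempty with he' | hne2
    · exact ⟨1, one_pos, fun y _ z hz => absurd hz (by simp [he'])⟩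
    have hK1 : IsCompact (closure (pU (E i).1 (E i).2 j)) := isClosed_closure.isCompact
    have hK2 : IsCompact (closure (pU (E i').1 (E i').2 j')) := isClosed_closure.isCompact
    have hne1' : (closure (pU (E i).1 (E i).2 j)).Nonempty := hne1.mono subset_closure
    have hne2' : (closure (pU (E i').1 (E i').2 j')).Nonempty := hne2.mono subset_closure
    obtain ⟨p, hp, hmin⟩ := (hK1.prod hK2).exists_isMinOn (hne1'.prod hne2')
      (continuous_dist.continuousOn :
        ContinuousOn (fun q : X × X => dist q.1 q.2) _)
    refine ⟨dist p.1 p.2, ?_, fun y hy z hz => ?_⟩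
    · rw [dist_pos]
      intro heq
      exact Set.disjoint_left.mp hdisj hp.1 (heq ▸ hp.2)
    · exact isMinOn_iff.mp hmin (y, z) ⟨subset_closure hy, subset_closure hz⟩

/-- Every fence admits an `ε`-cover for every `ε > 0`: a finite
open cover consisting of finitely many `ε`-chains, with links from different
chains disjoint, such that any two members with disjoint closures are a
positive distance apart. -/
theorem fence_has_eps_cover (X : Type*) [MetricSpace X] (hX : IsFenceSpace X)
    (ε : ℝ) (hε : 0 < ε) :
    ∃ (m : ℕ) (n : Fin m → ℕ) (U : (i : Fin m) → Fin (n i) → Set X),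
      (∀ i j, IsOpen (U i j)) ∧
      (∀ i j, Metric.diam (U i j) < ε) ∧
      (∀ i, ∀ j j' : Fin (n i),
        (closure (U i j) ∩ closure (U i j')).Nonempty ↔
          ((j : ℤ) - (j' : ℤ)).natAbs ≤ 1) ∧
      (∀ i i' : Fin m, i ≠ i' → ∀ j j', Disjoint (U i j) (U i' j')) ∧
      (∀ x : X, ∃ i j, x ∈ U i j) ∧
      (∀ i j i' j', Disjoint (closure (U i j)) (closure (U i' j')) →
        ∃ δ : ℝ, 0 < δ ∧ ∀ y ∈ U i j, ∀ z ∈ U i' j', δ ≤ dist y z) :=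
  fence_has_eps_cover' X hX.1 hX.2 ε hε
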